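/- Let X be the weight lattice of a finite root system, W its Weyl group, X* ⊆ X a W-invariant sublattice, and ρ^L ∈ X with ⟨α̌_i, ρ^L⟩ = l_i such that w(ρ^L) − ρ^L ∈ X* for all w ∈ W. If ξ = Σ_λ a_λ e^λ ∈ Z[X]^W satisfies a_λ = 0 for all λ ∈ X*, then the product ξ · χ(ρ^L − ρ) lies in the Z-span of Weyl characters χ(μ) with μ ∈ X^+ and μ ∉ (ρ^L − ρ) + X*. -/

import Mathlib

/-- The alternating sum `A_ν = Σ_{w ∈ W} ε(w) e^{w·ν}` in the group ring `ℤ[X]`. -/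
noncomputable def Aalt {X : Type*} [AddCommGroup X] {W : Type*} [Group W] [Fintype W]
    [DistribMulAction W X] (ε : W →* ℤˣ) (ρ : X) (ν : X) : AddMonoidAlgebra ℤ X :=
  ∑ w : W, AddMonoidAlgebra.single (w • (ν + ρ) - ρ) ((ε w : ℤˣ) : ℤ)

/-- Let `X` be the weight lattice of a finite root system with Weyl group
`W`, `X* ⊆ X` a `W`-invariant sublattice, and `ρ^L ∈ X` with `w(ρ^L) − ρ^L ∈ X*` for all
`w ∈ W`.  The Weyl characters are characterized by `A_0 · χ(μ) = A_μ` (`A_0` being a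
non-zero-divisor), dominance is recorded by the coroot functionals `pair i`, and every
`χ(λ)` either vanishes or equals `±χ(μ)` for a dominant `μ` in the shifted `W`-orbit of
`λ`.  If `ξ = Σ_λ a_λ e^λ ∈ ℤ[X]^W` has `a_λ = 0` for all `λ ∈ X*`, then
`ξ · χ(ρ^L − ρ)` lies in the `ℤ`-span of the Weyl characters `χ(μ)` with `μ` dominant and
`μ ∉ (ρ^L − ρ) + X*`. -/
theorem avoidance_lemma {X : Type*} [AddCommGroup X] {W : Type*} [Group W]
    [Fintype W] [DistribMulAction W X] (ε : W →* ℤˣ) (ρ ρL : X)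
    {I : Type*} (pair : I → X → ℤ)
    (Xstar : AddSubgroup X) (hstar : ∀ (w : W), ∀ x ∈ Xstar, w • x ∈ Xstar)
    (hρL : ∀ w : W, w • ρL - ρL ∈ Xstar)
    (χ : X → AddMonoidAlgebra ℤ X)
    (hχ : ∀ μ : X, Aalt ε ρ 0 * χ μ = Aalt ε ρ μ)
    (hreg : ∀ x y : AddMonoidAlgebra ℤ X, Aalt ε ρ 0 * x = Aalt ε ρ 0 * y → x = y)
    (hdom : ∀ lam : X, χ lam = 0 ∨ ∃ (w : W) (μ : X), (∀ i, 0 ≤ pair i μ) ∧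
      w • (lam + ρ) - ρ = μ ∧ (χ lam = χ μ ∨ χ lam = -χ μ))
    (ξ : AddMonoidAlgebra ℤ X) (hinv : ∀ (w : W) (lam : X), ξ.coeff (w • lam) = ξ.coeff lam)
    (hsupp : ∀ lam ∈ Xstar, ξ.coeff lam = 0) :
    ξ * χ (ρL - ρ) ∈ Submodule.span ℤ
      {y : AddMonoidAlgebra ℤ X | ∃ μ : X, (∀ i, 0 ≤ pair i μ) ∧
        μ - (ρL - ρ) ∉ Xstar ∧ y = χ μ} := by
  classical
  set c : AddMonoidAlgebra ℤ X :=
    ∑ lam ∈ ξ.coeff.support, ξ.coeff lam • χ (lam + (ρL - ρ)) with hc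
  have key : ξ * χ (ρL - ρ) = c := by
    apply hreg
    have h1 : Aalt ε ρ 0 * (ξ * χ (ρL - ρ)) = ξ * Aalt ε ρ (ρL - ρ) := by
      rw [mul_left_comm, hχ]
    have h2 : Aalt ε ρ 0 * c = ∑ lam ∈ ξ.coeff.support, ξ.coeff lam • Aalt ε ρ (lam + (ρL - ρ)) := by
      rw [hc, Finset.mul_sum]
      refine Finset.sum_congr rfl fun lam _ => ?_
      rw [mul_smul_comm, hχ]
    rw [h1, h2]
    have hξ : ξ = ∑ lam ∈ ξ.coeff.support, AddMonoidAlgebra.single lam (ξ.coeff lam) := by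
      conv_lhs => rw [← AddMonoidAlgebra.sum_coeff_single ξ]
      rfl
    conv_lhs => rw [hξ]
    unfold Aalt
    rw [Finset.sum_mul_sum, Finset.sum_comm]
    simp only [Finset.smul_sum]
    conv_rhs => rw [Finset.sum_comm]
    refine Finset.sum_congr rfl fun w _ => ?_
    refine Finset.sum_nbij' (fun lam => w⁻¹ • lam) (fun lam => w • lam) ?_ ?_ ?_ ?_ ?_
    · intro lam hlam
      rw [Finsupp.mem_support_iff] at hlam ⊢
      rwa [hinv]
    · intro lam hlam
      rw [Finsupp.mem_support_iff] at hlam ⊢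
      rwa [hinv]
    · intro lam _; exact smul_inv_smul w lam
    · intro lam _; exact inv_smul_smul w lam
    · intro lam _
      rw [AddMonoidAlgebra.single_mul_single, AddMonoidAlgebra.smul_single', hinv]
      congr 1
      simp only [smul_add, smul_inv_smul]
      abel
  rw [key, hc]
  refine Submodule.sum_mem _ fun lam hlam => ?_
  have hlamX : lam ∉ Xstar := fun h => (Finsupp.mem_support_iff.mp hlam) (hsupp lam h)
  rcases hdom (lam + (ρL - ρ)) with h0 | ⟨w, μ, hμdom, hμeq, hχeq⟩
  · rw [h0, smul_zero]; exact Submodule.zero_mem _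
  · have hμnot : μ - (ρL - ρ) ∉ Xstar := by
      intro hmem
      apply hlamX
      have hwl : w • lam = (μ - (ρL - ρ)) - (w • ρL - ρL) := by
        rw [← hμeq]
        have h3 : lam + (ρL - ρ) + ρ = lam + ρL := by abel
        rw [h3, smul_add]
        abel
      have hmem2 : w • lam ∈ Xstar := by
        rw [hwl]; exact sub_mem hmem (hρL w)
      have := hstar w⁻¹ _ hmem2
      rwa [inv_smul_smul] at this
    have hχμ : χ μ ∈ Submodule.span ℤ
        {y : AddMonoidAlgebra ℤ X | ∃ μ : X, (∀ i, 0 ≤ pair i μ) ∧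
          μ - (ρL - ρ) ∉ Xstar ∧ y = χ μ} :=
      Submodule.subset_span ⟨μ, hμdom, hμnot, rfl⟩
    rcases hχeq with h | h
    · rw [h]; exact Submodule.smul_mem _ _ hχμ
    · rw [h, smul_neg]
      exact neg_mem (Submodule.smul_mem _ _ hχμ)
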